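/- If N : I^n → I is a Jensen concave n-variable mean and M : I^n → I is a cyclically symmetric mean with M ≤ N pointwise, then M(x) ≤ (x₁+⋯+xₙ)/n for all x ∈ I^n. -/

import Mathlib

/-- Average of `2^k` elements of a convex set lies in the set. -/
lemma aux_avg_mem (I : Set ℝ) (hI : Convex ℝ I) (k : ℕ) (g : ℕ → ℝ)
    (hg : ∀ t, g t ∈ I) :
    (∑ t ∈ Finset.range (2 ^ k), g t) / 2 ^ k ∈ I := by
  have hP : (0:ℝ) < 2 ^ k := by positivity
  have h := hI.sum_mem (t := Finset.range (2 ^ k)) (w := fun _ => (1:ℝ) / 2 ^ k)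
    (z := g) (fun _ _ => by positivity)
    (by rw [Finset.sum_const, Finset.card_range, nsmul_eq_mul]; push_cast; field_simp) (fun t _ => hg t)
  have : ∑ t ∈ Finset.range (2 ^ k), ((1:ℝ) / 2 ^ k) • g t
      = (∑ t ∈ Finset.range (2 ^ k), g t) / 2 ^ k := by
    rw [Finset.sum_div]
    exact Finset.sum_congr rfl fun t _ => by rw [smul_eq_mul]; ring
  rwa [this] at h

/-- Dyadic Jensen inequality for a midpoint-concave function. -/
lemma aux_dyadic (I : Set ℝ) (hI : Convex ℝ I) (n : ℕ) (N : (Fin n → ℝ) → ℝ)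
    (hNconc : ∀ x y : Fin n → ℝ, (∀ i, x i ∈ I) → (∀ i, y i ∈ I) →
      (N x + N y) / 2 ≤ N (fun i => (x i + y i) / 2)) :
    ∀ (k : ℕ) (f : ℕ → Fin n → ℝ), (∀ t i, f t i ∈ I) →
      (∑ t ∈ Finset.range (2 ^ k), N (f t)) / 2 ^ k ≤
        N (fun i => (∑ t ∈ Finset.range (2 ^ k), f t i) / 2 ^ k) := by
  intro k
  induction k with
  | zero => intro f hf; simp
  | succ k ih =>
    intro f hf
    set g : ℕ → Fin n → ℝ := fun t => f (t + 2 ^ k) with hg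
    have hgf : ∀ t i, g t i ∈ I := fun t i => hf _ i
    have h1 := ih f hf
    have h2 := ih g hgf
    have mem1 : ∀ i, (∑ t ∈ Finset.range (2 ^ k), f t i) / 2 ^ k ∈ I :=
      fun i => aux_avg_mem I hI k (fun t => f t i) (fun t => hf t i)
    have mem2 : ∀ i, (∑ t ∈ Finset.range (2 ^ k), g t i) / 2 ^ k ∈ I :=
      fun i => aux_avg_mem I hI k (fun t => g t i) (fun t => hgf t i)
    have hc := hNconc _ _ mem1 mem2
    have hsplit : ∀ h : ℕ → ℝ, ∑ t ∈ Finset.range (2 ^ (k+1)), h t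
        = ∑ t ∈ Finset.range (2 ^ k), h t + ∑ t ∈ Finset.range (2 ^ k), h (t + 2 ^ k) := by
      intro h
      have e : 2 ^ (k+1) = 2 ^ k + 2 ^ k := by ring
      rw [e, Finset.sum_range_add]
      congr 1
      exact Finset.sum_congr rfl fun t _ => by rw [Nat.add_comm]
    have epoint : (fun i => ((∑ t ∈ Finset.range (2 ^ k), f t i) / 2 ^ k
          + (∑ t ∈ Finset.range (2 ^ k), g t i) / 2 ^ k) / 2)
        = fun i => (∑ t ∈ Finset.range (2 ^ (k+1)), f t i) / 2 ^ (k+1) := by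
      funext i
      rw [hsplit (fun t => f t i), ← add_div, div_div, ← pow_succ]
    rw [epoint] at hc
    calc (∑ t ∈ Finset.range (2 ^ (k+1)), N (f t)) / 2 ^ (k+1)
        = ((∑ t ∈ Finset.range (2 ^ k), N (f t)) / 2 ^ k
            + (∑ t ∈ Finset.range (2 ^ k), N (g t)) / 2 ^ k) / 2 := by
          rw [hsplit (fun t => N (f t)), ← add_div, div_div, ← pow_succ]
      _ ≤ (N (fun i => (∑ t ∈ Finset.range (2 ^ k), f t i) / 2 ^ k)
            + N (fun i => (∑ t ∈ Finset.range (2 ^ k), g t i) / 2 ^ k)) / 2 := by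
          gcongr
      _ ≤ _ := hc

open Fin.NatCast in
theorem stmt_1 (I : Set ℝ) (hI : Convex ℝ I) (n : ℕ) (hn : 0 < n)
    (M N : (Fin n → ℝ) → ℝ)
    (hMmean : ∀ x : Fin n → ℝ, (∀ i, x i ∈ I) →
      (∃ i, x i ≤ M x) ∧ (∃ i, M x ≤ x i))
    (hNmean : ∀ x : Fin n → ℝ, (∀ i, x i ∈ I) →
      (∃ i, x i ≤ N x) ∧ (∃ i, N x ≤ x i))
    (hNI : ∀ x : Fin n → ℝ, (∀ i, x i ∈ I) → N x ∈ I)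
    (hMcyc : ∀ x : Fin n → ℝ, (∀ i, x i ∈ I) → M (x ∘ finRotate n) = M x)
    (hNconc : ∀ x y : Fin n → ℝ, (∀ i, x i ∈ I) → (∀ i, y i ∈ I) →
      (N x + N y) / 2 ≤ N (fun i => (x i + y i) / 2))
    (hMN : ∀ x : Fin n → ℝ, (∀ i, x i ∈ I) → M x ≤ N x) :
    ∀ x : Fin n → ℝ, (∀ i, x i ∈ I) → M x ≤ (∑ i, x i) / n := by
  obtain ⟨m, rfl⟩ := Nat.exists_eq_succ_of_ne_zero hn.ne'
  intro x hx
  set σ := finRotate (m + 1) with hσ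
  -- powers of the rotation
  have hσpow : ∀ (t : ℕ) (i : Fin (m+1)), (σ ^ t) i = i + (t : Fin (m+1)) := by
    intro t
    induction t with
    | zero => intro i; simp
    | succ t ih =>
      intro i
      rw [pow_succ, Equiv.Perm.mul_apply, hσ, finRotate_succ_apply, ih]
      push_cast
      abel
  have hMrot : ∀ t : ℕ, M (x ∘ ⇑(σ ^ t)) = M x := by
    intro t
    induction t with
    | zero => simp
    | succ t ih =>
      have e : x ∘ ⇑(σ ^ (t+1)) = (x ∘ ⇑(σ ^ t)) ∘ σ := by
        funext i; simp [pow_succ, Equiv.Perm.mul_apply]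
      rw [e, hMcyc (x ∘ ⇑(σ ^ t)) (fun i => hx _), ih]
  have hSrot : ∀ t : ℕ, ∑ i, x ((σ ^ t) i) = ∑ i, x i := fun t => Equiv.sum_comp (σ ^ t) x
  set S : ℝ := ∑ i, x i with hS
  set C : ℝ := ∑ i, |x i| with hC
  have hxC : ∀ i, |x i| ≤ C := by
    intro i
    rw [hC]
    exact Finset.single_le_sum (f := fun j => |x j|) (fun j _ => abs_nonneg _)
      (Finset.mem_univ i)
  have hSC : |S| ≤ C := (Finset.abs_sum_le_sum_abs _ _)
  have hC0 : 0 ≤ C := Finset.sum_nonneg fun i _ => abs_nonneg _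
  set f : ℕ → Fin (m+1) → ℝ := fun t => x ∘ ⇑(σ ^ (t % (m+1))) with hf
  have hfI : ∀ t i, f t i ∈ I := fun t i => hx _
  have hMf : ∀ t, M x ≤ N (f t) := by
    intro t
    have := hMN (f t) (hfI t)
    rwa [hf, hMrot (t % (m+1))] at this
  -- block sums
  have hblock : ∀ i : Fin (m+1),
      ∑ t ∈ Finset.range (m+1), x ((σ ^ (t % (m+1))) i) = S := by
    intro i
    have e1 : ∀ t ∈ Finset.range (m+1),
        x ((σ ^ (t % (m+1))) i) = x (i + (t : Fin (m+1))) := by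
      intro t ht
      rw [Nat.mod_eq_of_lt (Finset.mem_range.1 ht), hσpow]
    rw [Finset.sum_congr rfl e1,
      ← Fin.sum_univ_eq_sum_range (fun t => x (i + (t : Fin (m+1)))) (m+1)]
    simp only [Fin.cast_val_eq_self]
    exact Equiv.sum_comp (Equiv.addLeft i) x
  have hmul : ∀ (i : Fin (m+1)) (q : ℕ),
      ∑ t ∈ Finset.range ((m+1) * q), x ((σ ^ (t % (m+1))) i) = q * S := by
    intro i q
    induction q with
    | zero => simp
    | succ q ih =>
      have e : (m+1) * (q+1) = (m+1) * q + (m+1) := by ring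
      rw [e, Finset.sum_range_add, ih]
      have e2 : ∀ t ∈ Finset.range (m+1),
          x ((σ ^ (((m+1) * q + t) % (m+1))) i) = x ((σ ^ (t % (m+1))) i) := by
        intro t _
        rw [Nat.mul_add_mod]
      rw [Finset.sum_congr rfl e2, hblock i]
      push_cast
      ring
  -- the key estimate
  have hbound : ∀ (k : ℕ) (i : Fin (m+1)),
      (∑ t ∈ Finset.range (2 ^ k), f t i) / 2 ^ k
        ≤ S / (m+1) + 2 * (m+1) * C / 2 ^ k := by
    intro k i
    set q := 2 ^ k / (m+1) with hq
    set rr := 2 ^ k % (m+1) with hrr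
    have hqr : 2 ^ k = (m+1) * q + rr := (Nat.div_add_mod _ _).symm
    have hrlt : rr < m + 1 := Nat.mod_lt _ (Nat.succ_pos m)
    set T : ℝ := ∑ t ∈ Finset.range rr, x ((σ ^ t) i) with hT
    have hsum : ∑ t ∈ Finset.range (2 ^ k), f t i = q * S + T := by
      rw [hf]
      simp only [Function.comp_apply]
      rw [hqr, Finset.sum_range_add, hmul i q]
      congr 1
      refine Finset.sum_congr rfl fun t ht => ?_
      rw [Nat.mul_add_mod, Nat.mod_eq_of_lt ((Finset.mem_range.1 ht).trans hrlt)]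
    have hTle : T ≤ rr * C := by
      calc T ≤ ∑ t ∈ Finset.range rr, C :=
            Finset.sum_le_sum fun t _ => (le_abs_self _).trans (hxC _)
        _ = rr * C := by rw [Finset.sum_const, Finset.card_range]; simp [nsmul_eq_mul]
    have hP : (0:ℝ) < 2 ^ k := by positivity
    have hn' : (0:ℝ) < (m+1 : ℝ) := by positivity
    have h2k : ((2:ℝ) ^ k) = (m+1) * q + rr := by exact_mod_cast hqr
    have hrle : ((rr:ℝ)) ≤ m + 1 := by exact_mod_cast hrlt.le
    have hSge : -C ≤ S := (abs_le.1 hSC).1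
    have hSle : S ≤ C := (abs_le.1 hSC).2
    rw [hsum]
    rw [div_add_div _ _ (ne_of_gt hn') (ne_of_gt hP), div_le_div_iff₀ hP (by positivity)]
    have hrpos : (0:ℝ) ≤ rr := by positivity
    have hqpos : (0:ℝ) ≤ (q:ℝ) := by positivity
    have inner : ((m:ℝ)+1) * T ≤ rr * S + 2 * ((m:ℝ)+1)^2 * C := by
      nlinarith [mul_le_mul_of_nonneg_left hTle hn'.le,
        mul_le_mul_of_nonneg_right hrle hC0,
        mul_le_mul_of_nonneg_left hSge hrpos,
        mul_le_mul_of_nonneg_left (mul_le_mul_of_nonneg_right hrle hC0) hn'.le,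
        mul_nonneg hC0 hn'.le]
    rw [h2k]
    nlinarith [mul_le_mul_of_nonneg_right inner
      (by positivity : (0:ℝ) ≤ ((m:ℝ)+1) * q + rr)]
  -- combine
  have main : ∀ k : ℕ, M x ≤ S / (m+1) + 2 * (m+1) * C / 2 ^ k := by
    intro k
    have hP : (0:ℝ) < 2 ^ k := by positivity
    have hd := aux_dyadic I hI (m+1) N hNconc k f hfI
    have hM1 : M x ≤ (∑ t ∈ Finset.range (2 ^ k), N (f t)) / 2 ^ k := by
      rw [le_div_iff₀ hP]
      calc M x * 2 ^ k = ∑ _t ∈ Finset.range (2 ^ k), M x := by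
            rw [Finset.sum_const, Finset.card_range]; simp [nsmul_eq_mul]; ring
        _ ≤ _ := Finset.sum_le_sum fun t _ => hMf t
    have hmem : ∀ i, (fun i => (∑ t ∈ Finset.range (2 ^ k), f t i) / 2 ^ k) i ∈ I :=
      fun i => aux_avg_mem I hI k (fun t => f t i) (fun t => hfI t i)
    obtain ⟨i, hi⟩ := (hNmean _ hmem).2
    calc M x ≤ (∑ t ∈ Finset.range (2 ^ k), N (f t)) / 2 ^ k := hM1
      _ ≤ N (fun i => (∑ t ∈ Finset.range (2 ^ k), f t i) / 2 ^ k) := hd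
      _ ≤ (∑ t ∈ Finset.range (2 ^ k), f t i) / 2 ^ k := hi
      _ ≤ S / (m+1) + 2 * (m+1) * C / 2 ^ k := hbound k i
  have final : M x ≤ S / (m+1) := by
    refine le_of_forall_pos_le_add fun ε hε => ?_
    obtain ⟨k, hk⟩ := pow_unbounded_of_one_lt (2 * (m+1) * C / ε) (one_lt_two (α := ℝ))
    have hP : (0:ℝ) < 2 ^ k := by positivity
    have hlt : 2 * (m+1) * C / 2 ^ k < ε := by
      rw [div_lt_iff₀ hP]
      rw [div_lt_iff₀ hε] at hk
      nlinarith
    linarith [main k]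
  have : ((m+1 : ℕ) : ℝ) = (m : ℝ) + 1 := by push_cast; ring
  rw [this]
  exact final
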